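/- If the class of 4-connected planar triangulations has 1-string B_2-VPG representations, then every 4-connected planar graph has a 1-string B_2-VPG representation, via stellating non-triangular faces (which preserves 4-connectivity away from separating triangles) and restricting the representation to the original vertex set. -/

import Mathlib

open scoped Classical

/-! ## Orthogonal curves and 1-string B₂-VPG representations -/

/-- A point in the plane. -/
abbrev Pt := ℝ × ℝ

/-- Two points span an axis-parallel segment. -/
def axisAligned (p q : Pt) : Prop := p.1 = q.1 ∨ p.2 = q.2

/-- An orthogonal curve, recorded by its corner points (endpoints and bends):
consecutive corner points are axis-aligned. -/
structure OrthoCurve where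
  pts : List Pt
  len2 : 2 ≤ pts.length
  ortho : pts.Chain' axisAligned

namespace OrthoCurve

/-- Number of bends of an orthogonal curve. -/
def bends (c : OrthoCurve) : ℕ := c.pts.length - 2

/-- The set of points of the curve: the union of the segments between
consecutive corner points. -/
def toSet (c : OrthoCurve) : Set Pt :=
  ⋃ i : Fin (c.pts.length - 1),
    segment ℝ (c.pts.get ⟨i.1, by have := i.2; omega⟩)
              (c.pts.get ⟨i.1 + 1, by have := i.2; omega⟩)

/-- The segment between the `i`-th pair of consecutive corners is vertical. -/
def IsVertSeg (p q : Pt) : Prop := p.1 = q.1 ∧ p.2 ≠ q.2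

/-- The curve has at most one vertical segment (so it is shaped like C, Z,
or a horizontal mirror image thereof, possibly degenerate). -/
def AtMostOneVertical (c : OrthoCurve) : Prop :=
  ∀ i j : Fin (c.pts.length - 1),
    IsVertSeg (c.pts.get ⟨i.1, by have := i.2; omega⟩)
              (c.pts.get ⟨i.1 + 1, by have := i.2; omega⟩) →
    IsVertSeg (c.pts.get ⟨j.1, by have := j.2; omega⟩)
              (c.pts.get ⟨j.1 + 1, by have := j.2; omega⟩) →
    i = j

end OrthoCurve

/-- A (partial) 1-string B₂-VPG representation of the edge set `E` of a graph `G`: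
every vertex gets an orthogonal curve with at most two bends, two curves share at
most one point, and they meet iff the corresponding pair is an edge in `E`. -/
structure VPGRep {V : Type*} (G : SimpleGraph V) (E : Set (Sym2 V)) where
  curve : V → OrthoCurve
  bends_le : ∀ v, (curve v).bends ≤ 2
  one_string : ∀ u v, u ≠ v → ((curve u).toSet ∩ (curve v).toSet).Subsingleton
  cross_iff : ∀ u v, u ≠ v →
    (((curve u).toSet ∩ (curve v).toSet).Nonempty ↔ s(u, v) ∈ E)

/-- `G` has a (full) 1-string B₂-VPG representation. -/
def HasB2VPG {V : Type*} (G : SimpleGraph V) : Prop := Nonempty (VPGRep G G.edgeSet)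

/-! ## Combinatorial plane triangulated disks -/

/-- The cyclically next index in a list. -/
def nextIdx {α : Type*} (l : List α) (i : Fin l.length) : Fin l.length :=
  ⟨(i.1 + 1) % l.length, Nat.mod_lt _ (Nat.lt_of_le_of_lt (Nat.zero_le _) i.2)⟩

/-- A triangulated disk: a plane graph whose outer face is a simple cycle
(listed in counter-clockwise order) and all of whose interior faces are
triangles; every interior edge lies on exactly two interior faces and every
outer edge on exactly one. -/
structure TriangulatedDisk (V : Type*) [DecidableEq V] where
  G : SimpleGraph V
  outer : List V
  outer_nodup : outer.Nodup
  outer_len : 3 ≤ outer.length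
  outer_adj : ∀ i : Fin outer.length, G.Adj (outer.get i) (outer.get (nextIdx outer i))
  faces : Finset (Finset V)
  face_card : ∀ f ∈ faces, f.card = 3
  face_clique : ∀ f ∈ faces, G.IsClique (↑f : Set V)
  edge_face_count : ∀ u v, G.Adj u v →
    (faces.filter (fun f => u ∈ f ∧ v ∈ f)).card =
      (if ∃ i : Fin outer.length,
          (outer.get i = u ∧ outer.get (nextIdx outer i) = v) ∨
          (outer.get i = v ∧ outer.get (nextIdx outer i) = u) then 1 else 2)

namespace TriangulatedDisk

variable {V : Type*} [DecidableEq V]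

/-- `u` and `v` are consecutive on the outer cycle. -/
def OuterAdj (D : TriangulatedDisk V) (u v : V) : Prop :=
  ∃ i : Fin D.outer.length,
    (D.outer.get i = u ∧ D.outer.get (nextIdx D.outer i) = v) ∨
    (D.outer.get i = v ∧ D.outer.get (nextIdx D.outer i) = u)

/-- A chord: an interior edge with both endpoints on the outer face. -/
def IsChord (D : TriangulatedDisk V) (u v : V) : Prop :=
  D.G.Adj u v ∧ u ∈ D.outer ∧ v ∈ D.outer ∧ ¬ D.OuterAdj u v

/-- The interior edges of a triangulated disk. -/
def interiorEdges (D : TriangulatedDisk V) : Set (Sym2 V) :=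
  {e | e ∈ D.G.edgeSet ∧ ∀ u v, e = s(u, v) → ¬ D.OuterAdj u v}

/-- `v` lies strictly inside the triangle `t`: it is not on `t` nor on the outer
face, and every walk from `v` to the outer face must pass through `t`. -/
def InsideTri (D : TriangulatedDisk V) (t : Finset V) (v : V) : Prop :=
  v ∉ t ∧ v ∉ D.outer ∧ ∀ w ∈ D.outer, ∀ p : D.G.Walk v w, ∃ x ∈ t, x ∈ p.support

/-- A separating triangle: a triangle of `G` having a vertex strictly inside it. -/
def SepTri (D : TriangulatedDisk V) (t : Finset V) : Prop :=
  t.card = 3 ∧ D.G.IsClique (↑t : Set V) ∧ ∃ v, D.InsideTri t v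

end TriangulatedDisk

/-- A W-triangulation: a triangulated disk without separating triangles. -/
structure WTriangulation (V : Type*) [DecidableEq V] extends TriangulatedDisk V where
  no_sep : ∀ t : Finset V, ¬ toTriangulatedDisk.SepTri t

/-- The underlying triangulated disk of a W-triangulation. -/
def WTriangulation.disk {V : Type*} [DecidableEq V] (W : WTriangulation V) :
    TriangulatedDisk V := W.toTriangulatedDisk

/-- The counter-clockwise path from `a` to `b` (both inclusive) along a cyclic
list `l`. -/
def cyclePath {V : Type*} [DecidableEq V] (l : List V) (a b : V) : List V :=
  let r := l.rotate (l.idxOf a)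
  r.take (r.idxOf b + 1)

/-- A W-triangulation together with three distinct corners `A`, `B`, `C`
appearing in counter-clockwise order on the outer face. -/
structure CornerSetup (V : Type*) [DecidableEq V] extends WTriangulation V where
  A : V
  B : V
  C : V
  hA : A ∈ toTriangulatedDisk.outer
  hB : B ∈ toTriangulatedDisk.outer
  hC : C ∈ toTriangulatedDisk.outer
  hAB : A ≠ B
  hBC : B ≠ C
  hCA : C ≠ A
  ccw : (toTriangulatedDisk.outer.rotate (toTriangulatedDisk.outer.idxOf A)).idxOf B <
        (toTriangulatedDisk.outer.rotate (toTriangulatedDisk.outer.idxOf A)).idxOf C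

namespace CornerSetup

variable {V : Type*} [DecidableEq V]

/-- The underlying triangulated disk. -/
def disk (S : CornerSetup V) : TriangulatedDisk V := S.toTriangulatedDisk

/-- The CCW outer path from `A` to `B`. -/
def PAB (S : CornerSetup V) : List V := cyclePath S.disk.outer S.A S.B
/-- The CCW outer path from `B` to `C`. -/
def PBC (S : CornerSetup V) : List V := cyclePath S.disk.outer S.B S.C
/-- The CCW outer path from `C` to `A`. -/
def PCA (S : CornerSetup V) : List V := cyclePath S.disk.outer S.C S.A

/-- The chord condition: no chord has both endpoints on a single one of the
three outer paths `P_AB`, `P_BC`, `P_CA`. -/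
def ChordCond (S : CornerSetup V) : Prop :=
  ∀ u v, S.disk.IsChord u v →
    ¬(u ∈ S.PAB ∧ v ∈ S.PAB) ∧ ¬(u ∈ S.PBC ∧ v ∈ S.PBC) ∧ ¬(u ∈ S.PCA ∧ v ∈ S.PCA)

end CornerSetup

/-! ## General plane graphs (as combinatorial maps by facial cycles) -/

/-- An embedded planar graph all of whose facial boundaries are simple cycles,
recorded by the finite set of its facial cycles (including the outer one);
every edge lies on exactly two faces. -/
structure PlaneGraph (V : Type*) [DecidableEq V] where
  G : SimpleGraph V
  faces : Finset (List V)
  outer : List V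
  outer_mem : outer ∈ faces
  face_nodup : ∀ f ∈ faces, f.Nodup
  face_len : ∀ f ∈ faces, 3 ≤ f.length
  face_cycle : ∀ f ∈ faces, ∀ i : Fin f.length, G.Adj (f.get i) (f.get (nextIdx f i))
  edge_count : ∀ u v, G.Adj u v →
    (faces.filter (fun f => ∃ i : Fin f.length,
        (f.get i = u ∧ f.get (nextIdx f i) = v) ∨
        (f.get i = v ∧ f.get (nextIdx f i) = u))).card = 2

/-- No separating triangle: every triangle of the graph bounds a face. -/
def PlaneGraph.NoSepTri {V : Type*} [DecidableEq V] (P : PlaneGraph V) : Prop :=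
  ∀ t : Finset V, t.card = 3 → P.G.IsClique (↑t : Set V) →
    ∃ f ∈ P.faces, f.toFinset = t

/-- `k`-connectivity: more than `k` vertices, and removing fewer than `k`
vertices leaves the graph connected. -/
def KConnected {V : Type*} [Fintype V] (k : ℕ) (G : SimpleGraph V) : Prop :=
  k + 1 ≤ Fintype.card V ∧
    ∀ s : Finset V, s.card < k → (G.induce ((↑s : Set V)ᶜ)).Connected


section Helpers

lemma next_val {α} (l : List α) (i : Fin l.length) : (nextIdx l i).1 = (i.1 + 1) % l.length := rfl

lemma mod_succ_inj {n i j : ℕ} (hi : i < n) (hj : j < n) (h : (i+1) % n = (j+1) % n) : i = j := by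
  rcases eq_or_lt_of_le (Nat.succ_le_of_lt hi) with h1 | h1
  · rcases eq_or_lt_of_le (Nat.succ_le_of_lt hj) with h2 | h2
    · omega
    · rw [show i + 1 = n by omega, Nat.mod_self, Nat.mod_eq_of_lt (by omega)] at h; omega
  · rcases eq_or_lt_of_le (Nat.succ_le_of_lt hj) with h2 | h2
    · rw [show j + 1 = n by omega, Nat.mod_self, Nat.mod_eq_of_lt (by omega)] at h; omega
    · rw [Nat.mod_eq_of_lt (by omega), Nat.mod_eq_of_lt (by omega)] at h; omega

lemma succ_mod_ne {n i : ℕ} (hi : i < n) (h2 : 2 ≤ n) : (i+1) % n ≠ i := by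
  rcases Nat.lt_or_ge (i+1) n with h | h
  · rw [Nat.mod_eq_of_lt h]; omega
  · have he : i + 1 = n := by omega
    rw [he, Nat.mod_self]; omega

lemma succ_succ_mod_ne {n i : ℕ} (hi : i < n) (h3 : 3 ≤ n) : ((i+1) % n + 1) % n ≠ i := by
  rcases Nat.lt_or_ge (i+1) n with h | h
  · rw [Nat.mod_eq_of_lt h]
    rcases Nat.lt_or_ge (i+2) n with h' | h'
    · rw [Nat.mod_eq_of_lt h']; omega
    · have he : i + 1 + 1 = n := by omega
      rw [he, Nat.mod_self]; omega
  · have he : i + 1 = n := by omega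
    rw [he, Nat.mod_self, Nat.mod_eq_of_lt (by omega)]; omega

lemma next_ne {α} (l : List α) (h2 : 2 ≤ l.length) (i : Fin l.length) : nextIdx l i ≠ i := by
  intro h
  exact succ_mod_ne i.2 h2 (congrArg Fin.val h)

lemma next_injective {α} (l : List α) : Function.Injective (nextIdx l) := by
  intro i j h
  exact Fin.ext (mod_succ_inj i.2 j.2 (congrArg Fin.val h))

lemma next_surjective {α} (l : List α) : Function.Surjective (nextIdx l) := by
  intro j
  have : Finite (Fin l.length) := inferInstance
  exact (Finite.injective_iff_surjective.mp (next_injective l)) j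

lemma next_next_ne {α} (l : List α) (h3 : 3 ≤ l.length) (i : Fin l.length) :
    nextIdx l (nextIdx l i) ≠ i := by
  intro h
  exact succ_succ_mod_ne i.2 h3 (congrArg Fin.val h)

-- card of a filter with a unique witness
lemma card_filter_unique {α : Type*} [Fintype α] [DecidableEq α] (p : α → Prop) [DecidablePred p]
    (hu : ∀ i j, p i → p j → i = j) :
    (Finset.univ.filter p).card = if ∃ i, p i then 1 else 0 := by
  split_ifs with h
  · obtain ⟨i, hi⟩ := h
    have : Finset.univ.filter p = {i} := by
      ext j; simp only [Finset.mem_filter, Finset.mem_univ, true_and, Finset.mem_singleton]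
      exact ⟨fun hj => hu j i hj hi, fun hj => hj ▸ hi⟩
    rw [this]; simp
  · push_neg at h
    rw [Finset.filter_false_of_mem (fun i _ => h i)]; simp

lemma card_filter_get_eq {α : Type*} [DecidableEq α] (l : List α) (hn : l.Nodup) (u : α)
    (hu : u ∈ l) : (Finset.univ.filter (fun i : Fin l.length => l.get i = u)).card = 1 := by
  rw [card_filter_unique _ (fun i j hi hj => List.nodup_iff_injective_get.mp hn (hi.trans hj.symm))]
  rw [if_pos]
  obtain ⟨i, hi⟩ := List.mem_iff_get.mp hu
  exact ⟨i, hi⟩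

lemma card_filter_get_next_eq {α : Type*} [DecidableEq α] (l : List α) (hn : l.Nodup) (u : α)
    (hu : u ∈ l) :
    (Finset.univ.filter (fun i : Fin l.length => l.get (nextIdx l i) = u)).card = 1 := by
  rw [← card_filter_get_eq l hn u hu]
  apply Finset.card_bij (fun i _ => nextIdx l i)
  · intro a ha; simp only [Finset.mem_filter, Finset.mem_univ, true_and] at *; exact ha
  · intro a _ b _ h; exact next_injective l h
  · intro b hb
    obtain ⟨a, rfl⟩ := next_surjective l b
    simp only [Finset.mem_filter, Finset.mem_univ, true_and] at *
    exact ⟨a, hb, rfl⟩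

/-- in a nodup cyclic list of length ≥ 3, the edge {u,v} occurs at most at one index -/
lemma edge_idx_unique {α : Type*} (l : List α) (hn : l.Nodup) (h3 : 3 ≤ l.length)
    (u v : α) :
    ∀ i j : Fin l.length,
      ((l.get i = u ∧ l.get (nextIdx l i) = v) ∨ (l.get i = v ∧ l.get (nextIdx l i) = u)) →
      ((l.get j = u ∧ l.get (nextIdx l j) = v) ∨ (l.get j = v ∧ l.get (nextIdx l j) = u)) →
      i = j := by
  have inj := List.nodup_iff_injective_get.mp hn
  rintro i j (⟨h1, h2⟩ | ⟨h1, h2⟩) (⟨h3', h4⟩ | ⟨h3', h4⟩)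
  · exact inj (h1.trans h3'.symm)
  · -- l.get i = u, next i = v ; l.get j = v, next j = u
    have e1 : j = nextIdx l i := inj (h3'.trans h2.symm)
    have e2 : i = nextIdx l j := inj (h1.trans h4.symm)
    exfalso; exact next_next_ne l h3 i (by rw [e1] at e2; exact e2.symm)
  · have e1 : i = nextIdx l j := inj (h1.trans h4.symm)
    have e2 : j = nextIdx l i := inj (h3'.trans h2.symm)
    exfalso; exact next_next_ne l h3 j (by rw [e1] at e2; exact e2.symm)
  · exact inj (h1.trans h3'.symm)

end Helpers
section Stell
variable {V : Type} [DecidableEq V] [Fintype V]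

/-- The non-triangular faces. -/
@[reducible] def BigFaces (P : PlaneGraph V) : Finset (List V) := P.faces.filter (fun g => ¬ g.length = 3)

/-- Vertex set after stellation. -/
@[reducible] def StellV (P : PlaneGraph V) : Type := V ⊕ {f : List V // f ∈ BigFaces P}

instance (P : PlaneGraph V) : DecidableEq (StellV P) := by unfold StellV; infer_instance
instance (P : PlaneGraph V) : Fintype (StellV P) := by unfold StellV; infer_instance

def stellAdj (P : PlaneGraph V) : StellV P → StellV P → Prop
  | .inl u, .inl v => P.G.Adj u v
  | .inl u, .inr f => u ∈ f.1
  | .inr f, .inl u => u ∈ f.1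
  | .inr _, .inr _ => False

/-- Graph after stellation. -/
def StellG (P : PlaneGraph V) : SimpleGraph (StellV P) where
  Adj := stellAdj P
  symm := ⟨by
    rintro (u|f) (v|g) h
    · exact (SimpleGraph.Adj.symm h)
    · exact h
    · exact h
    · exact h.elim⟩
  loopless := ⟨by
    rintro (u|f) h
    · exact P.G.irrefl (v := u) h
    · exact h⟩

/-- The generic "edge occurs on face" predicate. -/
def q {α : Type} (u v : α) (g : List α) : Prop :=
  ∃ i : Fin g.length,
    (g.get i = u ∧ g.get (nextIdx g i) = v) ∨ (g.get i = v ∧ g.get (nextIdx g i) = u)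

lemma q_triple {α : Type} (a b c x y : α) :
    q x y [a, b, c] ↔
      ((a = x ∧ b = y) ∨ (b = x ∧ c = y) ∨ (c = x ∧ a = y) ∨
       (a = y ∧ b = x) ∨ (b = y ∧ c = x) ∨ (c = y ∧ a = x)) := by
  constructor
  · rintro ⟨i, h⟩
    fin_cases i <;> simp [nextIdx] at h <;> tauto
  · intro h
    rcases h with ⟨h1,h2⟩|⟨h1,h2⟩|⟨h1,h2⟩|⟨h1,h2⟩|⟨h1,h2⟩|⟨h1,h2⟩
    exacts [⟨⟨0, by norm_num⟩, by simp [nextIdx]; tauto⟩,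
            ⟨⟨1, by norm_num⟩, by simp [nextIdx]; tauto⟩,
            ⟨⟨2, by norm_num⟩, by simp [nextIdx]; tauto⟩,
            ⟨⟨0, by norm_num⟩, by simp [nextIdx]; tauto⟩,
            ⟨⟨1, by norm_num⟩, by simp [nextIdx]; tauto⟩,
            ⟨⟨2, by norm_num⟩, by simp [nextIdx]; tauto⟩]

lemma q_map {α β : Type} (g : α → β) (hg : Function.Injective g) (u v : α) (f : List α) :
    q (g u) (g v) (f.map g) ↔ q u v f := by
  unfold q
  constructor
  · rintro ⟨i, h⟩
    refine ⟨⟨i.1, by simpa using i.2⟩, ?_⟩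
    simp only [List.get_eq_getElem, List.getElem_map, next_val, List.length_map] at h ⊢
    rcases h with ⟨h1, h2⟩ | ⟨h1, h2⟩
    · exact Or.inl ⟨hg h1, hg h2⟩
    · exact Or.inr ⟨hg h1, hg h2⟩
  · rintro ⟨i, h⟩
    refine ⟨⟨i.1, by simpa using i.2⟩, ?_⟩
    simp only [List.get_eq_getElem, List.getElem_map, next_val, List.length_map] at h ⊢
    rcases h with ⟨h1, h2⟩ | ⟨h1, h2⟩
    · exact Or.inl ⟨by rw [h1], by rw [h2]⟩
    · exact Or.inr ⟨by rw [h1], by rw [h2]⟩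

lemma q_map_not_mem {α β : Type} (g : α → β) (x y : β) (hx : ∀ a, g a ≠ x) (f : List α) :
    ¬ q x y (f.map g) := by
  rintro ⟨i, h⟩
  simp only [List.get_eq_getElem, List.getElem_map] at h
  rcases h with ⟨h1, _⟩ | ⟨_, h2⟩
  · exact hx _ h1
  · exact hx _ h2

end Stell
section Stell2
variable {V : Type} [DecidableEq V] [Fintype V]

lemma bigfaces_len {P : PlaneGraph V} {f : List V} (hf : f ∈ BigFaces P) : 4 ≤ f.length := by
  rw [BigFaces, Finset.mem_filter] at hf
  have := P.face_len f hf.1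
  omega

lemma bigfaces_mem {P : PlaneGraph V} {f : List V} (hf : f ∈ BigFaces P) : f ∈ P.faces := by
  rw [BigFaces, Finset.mem_filter] at hf; exact hf.1

/-- Stellation triangle of a big face at index `i`. -/
def triF (P : PlaneGraph V) (f : {f : List V // f ∈ BigFaces P}) (i : Fin f.1.length) :
    List (StellV P) :=
  [Sum.inl (f.1.get i), Sum.inl (f.1.get (nextIdx f.1 i)), Sum.inr f]

/-- The faces generated by a face of `P`. -/
def piece (P : PlaneGraph V) (f : {g : List V // g ∈ P.faces}) : Finset (List (StellV P)) :=
  if h : f.1.length = 3 then {f.1.map Sum.inl}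
  else (Finset.univ : Finset (Fin f.1.length)).image
    (fun i => triF P ⟨f.1, Finset.mem_filter.mpr ⟨f.2, h⟩⟩ i)

def stellFaces (P : PlaneGraph V) : Finset (List (StellV P)) :=
  P.faces.attach.biUnion (piece P)

def stellOuter (P : PlaneGraph V) : List (StellV P) :=
  if h : P.outer.length = 3 then P.outer.map Sum.inl
  else triF P ⟨P.outer, Finset.mem_filter.mpr ⟨P.outer_mem, h⟩⟩
        ⟨0, show 0 < P.outer.length by have := P.face_len _ P.outer_mem; omega⟩

lemma triF_injective (P : PlaneGraph V) (f : {f : List V // f ∈ BigFaces P}) :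
    Function.Injective (triF P f) := by
  intro i j h
  simp only [triF, List.cons.injEq, Sum.inl.injEq] at h
  exact List.nodup_iff_injective_get.mp (P.face_nodup f.1 (bigfaces_mem f.2)) h.1

lemma mem_piece_cases {P : PlaneGraph V} {f : {g : List V // g ∈ P.faces}}
    {x : List (StellV P)} (hx : x ∈ piece P f) :
    (f.1.length = 3 ∧ x = f.1.map Sum.inl) ∨
    (∃ (h : ¬ f.1.length = 3) (i : Fin f.1.length),
      x = triF P ⟨f.1, Finset.mem_filter.mpr ⟨f.2, h⟩⟩ i) := by
  by_cases h : f.1.length = 3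
  · rw [piece, dif_pos h, Finset.mem_singleton] at hx
    exact Or.inl ⟨h, hx⟩
  · rw [piece, dif_neg h] at hx
    obtain ⟨i, _, rfl⟩ := Finset.mem_image.mp hx
    exact Or.inr ⟨h, i, rfl⟩

lemma piece_disjoint (P : PlaneGraph V) :
    ∀ f ∈ P.faces.attach, ∀ g ∈ P.faces.attach, f ≠ g →
      Disjoint (piece P f) (piece P g) := by
  intro f _ g _ hfg
  rw [Finset.disjoint_left]
  intro x hxf hxg
  apply hfg
  rcases mem_piece_cases hxf with ⟨h1, rfl⟩ | ⟨h1, i, rfl⟩ <;>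
    rcases mem_piece_cases hxg with ⟨h2, he⟩ | ⟨h2, j, he⟩
  · exact Subtype.ext (List.map_injective_iff.mpr Sum.inl_injective he)
  · exfalso
    -- map inl = triangle containing inr
    have : Sum.inr (⟨g.1, Finset.mem_filter.mpr ⟨g.2, h2⟩⟩ : {f : List V // f ∈ BigFaces P})
        ∈ f.1.map (Sum.inl : V → StellV P) := by
      rw [he]; simp [triF]
    simp only [List.mem_map] at this
    obtain ⟨a, _, ha⟩ := this
    exact Sum.inl_ne_inr ha
  · exfalso
    have : Sum.inr (⟨f.1, Finset.mem_filter.mpr ⟨f.2, h1⟩⟩ : {f : List V // f ∈ BigFaces P})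
        ∈ g.1.map (Sum.inl : V → StellV P) := by
      rw [← he]; simp [triF]
    simp only [List.mem_map] at this
    obtain ⟨a, _, ha⟩ := this
    exact Sum.inl_ne_inr ha
  · -- both triangles: compare inr components
    have := congrArg (fun l => l[2]?) he
    simp only [triF] at this
    simp at this
    exact this

end Stell2
section Stell3
variable {V : Type} [DecidableEq V] [Fintype V]

lemma q_map_not_mem' {α β : Type} (g : α → β) (x y : β) (hy : ∀ a, g a ≠ y) (f : List α) :
    ¬ q x y (f.map g) := by
  rintro ⟨i, h⟩
  simp only [List.get_eq_getElem, List.getElem_map] at h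
  rcases h with ⟨_, h2⟩ | ⟨h1, _⟩
  · exact hy _ h2
  · exact hy _ h1

lemma piece_count_inl (P : PlaneGraph V) (u v : V)
    (f : {g : List V // g ∈ P.faces}) :
    ((piece P f).filter (q (Sum.inl u : StellV P) (Sum.inl v))).card
      = if q u v f.1 then 1 else 0 := by
  by_cases h : f.1.length = 3
  · rw [piece, dif_pos h, Finset.filter_singleton]
    by_cases hq : q u v f.1
    · rw [if_pos ((q_map Sum.inl Sum.inl_injective u v f.1).mpr hq), if_pos hq]
      simp
    · rw [if_neg (fun hc => hq ((q_map Sum.inl Sum.inl_injective u v f.1).mp hc)), if_neg hq]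
      simp
  · rw [piece, dif_neg h, Finset.filter_image,
      Finset.card_image_of_injective _ (triF_injective P _)]
    have hmem : f.1 ∈ BigFaces P := Finset.mem_filter.mpr ⟨f.2, h⟩
    have hlen : 4 ≤ f.1.length := bigfaces_len hmem
    have hnd : f.1.Nodup := P.face_nodup f.1 f.2
    have hpt : ∀ i : Fin f.1.length,
        (q (Sum.inl u : StellV P) (Sum.inl v) (triF P ⟨f.1, hmem⟩ i)) ↔
        ((f.1.get i = u ∧ f.1.get (nextIdx f.1 i) = v) ∨
         (f.1.get i = v ∧ f.1.get (nextIdx f.1 i) = u)) := by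
      intro i
      rw [triF, q_triple]
      constructor
      · intro hh
        simp only [Sum.inl.injEq, reduceCtorEq, false_and, and_false, or_false, false_or] at hh
        tauto
      · intro hh
        simp only [Sum.inl.injEq, reduceCtorEq, false_and, and_false, or_false, false_or]
        tauto
    rw [Finset.filter_congr (fun i _ => hpt i)]
    rw [card_filter_unique _ (edge_idx_unique f.1 hnd (by omega) u v)]
    exact ite_congr rfl (fun _ => rfl) (fun _ => rfl)

lemma piece_count_inr (P : PlaneGraph V) (u : V) (f₀ : {f : List V // f ∈ BigFaces P})
    (hu : u ∈ f₀.1) (f : {g : List V // g ∈ P.faces}) :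
    ((piece P f).filter (q (Sum.inl u : StellV P) (Sum.inr f₀))).card
      = if f.1 = f₀.1 then 2 else 0 := by
  by_cases hf : f.1 = f₀.1
  · rw [if_pos hf]
    have h3 : ¬ f.1.length = 3 := by
      rw [hf]
      exact (Finset.mem_filter.mp f₀.2).2
    rw [piece, dif_neg h3, Finset.filter_image,
      Finset.card_image_of_injective _ (triF_injective P _)]
    have hmem : f.1 ∈ BigFaces P := Finset.mem_filter.mpr ⟨f.2, h3⟩
    have hlen : 4 ≤ f.1.length := bigfaces_len hmem
    have hnd : f.1.Nodup := P.face_nodup f.1 f.2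
    have hface : (⟨f.1, hmem⟩ : {f : List V // f ∈ BigFaces P}) = f₀ := Subtype.ext hf
    have hpt : ∀ i : Fin f.1.length,
        (q (Sum.inl u : StellV P) (Sum.inr f₀) (triF P ⟨f.1, hmem⟩ i)) ↔
        (f.1.get i = u ∨ f.1.get (nextIdx f.1 i) = u) := by
      intro i
      rw [triF, q_triple]
      have hc : (Sum.inr (⟨f.1, hmem⟩ : {f : List V // f ∈ BigFaces P}) : StellV P)
          = Sum.inr f₀ := by rw [hface]
      rw [hc]
      constructor
      · intro hh
        simp only [Sum.inl.injEq, Sum.inr.injEq, reduceCtorEq, false_and, and_false,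
          and_true, true_and, or_false, false_or] at hh
        tauto
      · intro hh
        simp only [Sum.inl.injEq, Sum.inr.injEq, reduceCtorEq, false_and, and_false,
          and_true, true_and, or_false, false_or]
        tauto
    rw [Finset.filter_congr (fun i _ => hpt i), Finset.filter_or,
      Finset.card_union_of_disjoint, card_filter_get_eq f.1 hnd u (hf ▸ hu),
      card_filter_get_next_eq f.1 hnd u (hf ▸ hu)]
    rw [Finset.disjoint_filter]
    intro i _ h1 h2
    exact next_ne f.1 (by omega) i
      (List.nodup_iff_injective_get.mp hnd (h2.trans h1.symm))
  · rw [if_neg hf]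
    rw [Finset.card_eq_zero, Finset.filter_eq_empty_iff]
    intro x hx
    rcases mem_piece_cases hx with ⟨h1, rfl⟩ | ⟨h1, i, rfl⟩
    · exact q_map_not_mem' Sum.inl _ _ (fun a => Sum.inl_ne_inr) f.1
    · rw [triF, q_triple]
      have hne : Sum.inr (⟨f.1, Finset.mem_filter.mpr ⟨f.2, h1⟩⟩ :
          {f : List V // f ∈ BigFaces P}) ≠ (Sum.inr f₀ : StellV P) := by
        intro hc
        exact hf (congrArg Subtype.val (Sum.inr_injective (α := V) hc))
      rintro (⟨h1,h2⟩|⟨h1,h2⟩|⟨h1,h2⟩|⟨h1,h2⟩|⟨h1,h2⟩|⟨h1,h2⟩)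
      · exact Sum.inl_ne_inr h2
      · exact hne h2
      · exact Sum.inl_ne_inr h1.symm -- c = x : inr = inl u
      · exact Sum.inl_ne_inr h1
      · exact Sum.inl_ne_inr h1
      · exact hne h1

end Stell3
section Stell4
variable {V : Type} [DecidableEq V] [Fintype V]

lemma filter_iff_congr {α : Type*} (s : Finset α) (p p' : α → Prop)
    [DecidablePred p] [DecidablePred p'] (h : ∀ a, p a ↔ p' a) :
    (s.filter p).card = (s.filter p').card := by
  congr 1
  ext a
  simp only [Finset.mem_filter, h a]

lemma q_symm {α : Type} (u v : α) (g : List α) : q u v g ↔ q v u g := by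
  constructor <;> rintro ⟨i, h⟩ <;> exact ⟨i, h.symm⟩

lemma stell_count (P : PlaneGraph V) (x y : StellV P) (hxy : (StellG P).Adj x y) :
    ((stellFaces P).filter (q x y)).card = 2 := by
  have hdisj : ∀ f ∈ P.faces.attach, ∀ g ∈ P.faces.attach, f ≠ g →
      Disjoint ((piece P f).filter (q x y)) ((piece P g).filter (q x y)) :=
    fun f hf g hg hfg =>
      Finset.disjoint_filter_filter (piece_disjoint P f hf g hg hfg)
  rw [stellFaces, Finset.filter_biUnion, Finset.card_biUnion hdisj]
  match x, y with
  | .inl u, .inl v =>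
    have hadj : P.G.Adj u v := hxy
    calc ∑ f ∈ P.faces.attach, ((piece P f).filter (q (Sum.inl u) (Sum.inl v))).card
        = ∑ f ∈ P.faces.attach, (if q u v f.1 then 1 else 0) := by
          exact Finset.sum_congr rfl (fun f _ => piece_count_inl P u v f)
      _ = ∑ g ∈ P.faces, (if q u v g then 1 else 0) :=
          Finset.sum_attach P.faces (fun g => if q u v g then 1 else 0)
      _ = (P.faces.filter (q u v)).card := (Finset.card_filter _ _).symm
      _ = 2 := by
          rw [filter_iff_congr P.faces (q u v) (fun g => ∃ i : Fin g.length,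
              (g.get i = u ∧ g.get (nextIdx g i) = v) ∨
              (g.get i = v ∧ g.get (nextIdx g i) = u)) (fun g => Iff.rfl)]
          exact P.edge_count u v hadj
  | .inl u, .inr f₀ =>
    have hu : u ∈ f₀.1 := hxy
    calc ∑ f ∈ P.faces.attach, ((piece P f).filter (q (Sum.inl u) (Sum.inr f₀))).card
        = ∑ f ∈ P.faces.attach, (if f.1 = f₀.1 then 2 else 0) := by
          exact Finset.sum_congr rfl (fun f _ => piece_count_inr P u f₀ hu f)
      _ = ∑ g ∈ P.faces, (if g = f₀.1 then 2 else 0) :=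
          Finset.sum_attach P.faces (fun g => if g = f₀.1 then 2 else 0)
      _ = 2 := by
          rw [Finset.sum_ite_eq' P.faces f₀.1 (fun _ => 2)]
          exact if_pos (bigfaces_mem f₀.2)
  | .inr f₀, .inl u =>
    have hu : u ∈ f₀.1 := hxy
    calc ∑ f ∈ P.faces.attach, ((piece P f).filter (q (Sum.inr f₀) (Sum.inl u))).card
        = ∑ f ∈ P.faces.attach, ((piece P f).filter (q (Sum.inl u) (Sum.inr f₀))).card := by
          refine Finset.sum_congr rfl (fun f _ => ?_)
          rw [Finset.filter_congr (fun g _ => q_symm _ _ g)]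
      _ = ∑ f ∈ P.faces.attach, (if f.1 = f₀.1 then 2 else 0) := by
          exact Finset.sum_congr rfl (fun f _ => piece_count_inr P u f₀ hu f)
      _ = ∑ g ∈ P.faces, (if g = f₀.1 then 2 else 0) :=
          Finset.sum_attach P.faces (fun g => if g = f₀.1 then 2 else 0)
      _ = 2 := by
          rw [Finset.sum_ite_eq' P.faces f₀.1 (fun _ => 2)]
          exact if_pos (bigfaces_mem f₀.2)
  | .inr _, .inr _ => exact hxy.elim

/-- The stellated plane graph: all faces are triangles. -/
def stellP (P : PlaneGraph V) : PlaneGraph (StellV P) where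
  G := StellG P
  faces := stellFaces P
  outer := stellOuter P
  outer_mem := by
    rw [stellFaces, Finset.mem_biUnion]
    refine ⟨⟨P.outer, P.outer_mem⟩, Finset.mem_attach _ _, ?_⟩
    rw [stellOuter, piece]
    by_cases h : P.outer.length = 3
    · rw [dif_pos h, dif_pos h, Finset.mem_singleton]
    · rw [dif_neg h, dif_neg h, Finset.mem_image]
      exact ⟨_, Finset.mem_univ _, rfl⟩
  face_nodup := by
    intro x hx
    rw [stellFaces, Finset.mem_biUnion] at hx
    obtain ⟨f, _, hxf⟩ := hx
    rcases mem_piece_cases hxf with ⟨h1, rfl⟩ | ⟨h1, i, rfl⟩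
    · exact (P.face_nodup f.1 f.2).map Sum.inl_injective
    · have hmem : f.1 ∈ BigFaces P := Finset.mem_filter.mpr ⟨f.2, h1⟩
      have hne : f.1.get i ≠ f.1.get (nextIdx f.1 i) := by
        intro hc
        exact next_ne f.1 (by have := bigfaces_len hmem; omega) i
          (List.nodup_iff_injective_get.mp (P.face_nodup f.1 f.2) hc.symm)
      simp [triF, hne]
      exact fun hc => hne hc
  face_len := by
    intro x hx
    rw [stellFaces, Finset.mem_biUnion] at hx
    obtain ⟨f, _, hxf⟩ := hx
    rcases mem_piece_cases hxf with ⟨h1, rfl⟩ | ⟨h1, i, rfl⟩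
    · simp [h1]
    · simp [triF]
  face_cycle := by
    intro x hx i
    rw [stellFaces, Finset.mem_biUnion] at hx
    obtain ⟨f, _, hxf⟩ := hx
    rcases mem_piece_cases hxf with ⟨h1, rfl⟩ | ⟨h1, i', rfl⟩
    · have hl : (f.1.map (Sum.inl : V → StellV P)).length = f.1.length :=
        List.length_map _
      have hi : i.1 < f.1.length := hl ▸ i.2
      have := P.face_cycle f.1 f.2 ⟨i.1, hi⟩
      simp only [List.get_eq_getElem, List.getElem_map, next_val, List.length_map]
      exact this
    · have hmem : f.1 ∈ BigFaces P := Finset.mem_filter.mpr ⟨f.2, h1⟩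
      have h4 := bigfaces_len hmem
      fin_cases i
      · show (StellG P).Adj (Sum.inl (f.1.get i')) _
        have := P.face_cycle f.1 f.2 i'
        simp only [triF, nextIdx]
        norm_num
        exact this
      · show (StellG P).Adj (Sum.inl (f.1.get (nextIdx f.1 i'))) _
        simp only [triF, nextIdx]
        norm_num
        exact List.getElem_mem _
      · simp only [triF, nextIdx]
        norm_num
        exact List.getElem_mem _
  edge_count := by
    intro u v h
    rw [filter_iff_congr (stellFaces P) (fun g => ∃ i : Fin g.length,
        (g.get i = u ∧ g.get (nextIdx g i) = v) ∨
        (g.get i = v ∧ g.get (nextIdx g i) = u)) (q u v) (fun g => Iff.rfl)]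
    exact stell_count P u v h

end Stell4
section Stell5
variable {V : Type} [DecidableEq V] [Fintype V]

lemma stellP_tri (P : PlaneGraph V) : ∀ f ∈ (stellP P).faces, f.length = 3 := by
  intro x hx
  have hx' : x ∈ stellFaces P := hx
  rw [stellFaces, Finset.mem_biUnion] at hx'
  obtain ⟨f, _, hxf⟩ := hx'
  rcases mem_piece_cases hxf with ⟨h1, rfl⟩ | ⟨h1, i, rfl⟩
  · simp [h1]
  · simp [triF]

lemma stell_conn (P : PlaneGraph V) (hcon : KConnected 4 P.G) :
    KConnected 4 (stellP P).G := by
  obtain ⟨hcard, hrem⟩ := hcon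
  constructor
  · exact le_trans hcard (Fintype.card_le_of_injective (Sum.inl : V → StellV P)
      Sum.inl_injective)
  · intro s hs
    set s₀ : Finset V := Finset.univ.filter (fun v => Sum.inl v ∈ s) with hs₀
    have hs₀card : s₀.card < 4 := by
      have himg : s₀.image (Sum.inl : V → StellV P) ⊆ s := by
        intro x hx
        obtain ⟨v, hv, rfl⟩ := Finset.mem_image.mp hx
        exact (Finset.mem_filter.mp hv).2
      calc s₀.card = (s₀.image (Sum.inl : V → StellV P)).card :=
            (Finset.card_image_of_injective _ Sum.inl_injective).symm
        _ ≤ s.card := Finset.card_le_card himg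
        _ < 4 := hs
    have hP : (P.G.induce ((↑s₀ : Set V)ᶜ)).Connected := hrem s₀ hs₀card
    -- the graph homomorphism between induced subgraphs
    have hmemi : ∀ v : V, v ∈ ((↑s₀ : Set V)ᶜ) → (Sum.inl v : StellV P) ∈ ((↑s : Set (StellV P))ᶜ) := by
      intro v hv hc
      exact hv (by simpa [hs₀] using hc)
    let φ : P.G.induce ((↑s₀ : Set V)ᶜ) →g (StellG P).induce ((↑s : Set (StellV P))ᶜ) :=
      ⟨fun x => ⟨Sum.inl x.1, hmemi x.1 x.2⟩, fun {a b} hab => hab⟩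
    rw [SimpleGraph.connected_iff]
    have hne : ∃ v : V, v ∉ s₀ := by
      by_contra hc
      push_neg at hc
      have : s₀ = Finset.univ := Finset.eq_univ_iff_forall.mpr hc
      rw [this] at hs₀card
      simp only [Finset.card_univ] at hs₀card
      omega
    obtain ⟨v₀, hv₀⟩ := hne
    have hv₀' : (Sum.inl v₀ : StellV P) ∈ ((↑s : Set (StellV P))ᶜ) :=
      hmemi v₀ (by simpa using hv₀)
    refine ⟨?_, ⟨⟨Sum.inl v₀, hv₀'⟩⟩⟩
    -- every vertex reaches an original vertex
    have key : ∀ x : ((↑s : Set (StellV P))ᶜ : Set (StellV P)),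
        ∃ (v : V) (hv : v ∈ ((↑s₀ : Set V)ᶜ)),
          ((StellG P).induce ((↑s : Set (StellV P))ᶜ)).Reachable x ⟨Sum.inl v, hmemi v hv⟩ := by
      rintro ⟨(u | f), hx⟩
      · have hu : u ∈ ((↑s₀ : Set V)ᶜ) := by
          intro hc
          exact hx (by
            simp only [hs₀, Finset.coe_filter, Set.mem_setOf_eq] at hc
            exact hc.2)
        exact ⟨u, hu, by rfl⟩
      · -- a stellation vertex: find a surviving neighbour on its face
        have h4 : 4 ≤ f.1.length := bigfaces_len f.2
        have hnd : f.1.Nodup := P.face_nodup f.1 (bigfaces_mem f.2)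
        have hcard4 : 4 ≤ f.1.toFinset.card := by
          rw [List.toFinset_card_of_nodup hnd]; exact h4
        have hlt : (f.1.toFinset.filter (fun u => (Sum.inl u : StellV P) ∈ s)).card
            < f.1.toFinset.card := by
          have hsub : (f.1.toFinset.filter (fun u => (Sum.inl u : StellV P) ∈ s)).image
              (Sum.inl : V → StellV P) ⊆ s := by
            intro x hxm
            obtain ⟨w, hw, rfl⟩ := Finset.mem_image.mp hxm
            exact (Finset.mem_filter.mp hw).2
          calc (f.1.toFinset.filter (fun u => (Sum.inl u : StellV P) ∈ s)).card
              = ((f.1.toFinset.filter (fun u => (Sum.inl u : StellV P) ∈ s)).image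
                  (Sum.inl : V → StellV P)).card :=
                (Finset.card_image_of_injective _ Sum.inl_injective).symm
            _ ≤ s.card := Finset.card_le_card hsub
            _ < 4 := hs
            _ ≤ f.1.toFinset.card := hcard4
        have hss : (f.1.toFinset.filter (fun u => (Sum.inl u : StellV P) ∈ s))
            ⊂ f.1.toFinset :=
          lt_of_le_of_ne (Finset.filter_subset _ _)
            (fun he => absurd (congrArg Finset.card he) (Nat.ne_of_lt hlt))
        obtain ⟨u, hu, hunotin⟩ := Finset.exists_of_ssubset hss
        have humem : u ∈ f.1 := List.mem_toFinset.mp hu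
        have huns : (Sum.inl u : StellV P) ∉ s := by
          intro hc
          exact hunotin (Finset.mem_filter.mpr ⟨hu, hc⟩)
        have hu₀ : u ∈ ((↑s₀ : Set V)ᶜ) := by
          intro hc
          simp only [hs₀, Finset.coe_filter, Set.mem_setOf_eq] at hc
          exact huns hc.2
        refine ⟨u, hu₀, ?_⟩
        have hadj : ((StellG P).induce ((↑s : Set (StellV P))ᶜ)).Adj
            ⟨Sum.inr f, hx⟩ ⟨Sum.inl u, hmemi u hu₀⟩ := humem
        exact hadj.reachable
    intro x y
    obtain ⟨vx, hvx, hx⟩ := key x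
    obtain ⟨vy, hvy, hy⟩ := key y
    refine hx.trans (SimpleGraph.Reachable.trans ?_ hy.symm)
    have hre : (P.G.induce ((↑s₀ : Set V)ᶜ)).Reachable ⟨vx, hvx⟩ ⟨vy, hvy⟩ :=
      hP.preconnected _ _
    exact hre.map φ

end Stell5

/-- If every 4-connected planar triangulation has a 1-string
B₂-VPG representation, then every 4-connected planar graph has one. -/
theorem stmt8
    (hyp : ∀ (V : Type) (dV : DecidableEq V) (fV : Fintype V) (P : @PlaneGraph V dV),
      (∀ f ∈ P.faces, f.length = 3) → @KConnected V fV 4 P.G → HasB2VPG P.G) :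
    ∀ (V : Type) (dV : DecidableEq V) (fV : Fintype V) (P : @PlaneGraph V dV),
      @KConnected V fV 4 P.G → HasB2VPG P.G := by
  intro V dV fV P hcon
  obtain ⟨rep⟩ := hyp (StellV P) inferInstance inferInstance (stellP P)
    (stellP_tri P) (stell_conn P hcon)
  refine ⟨⟨fun v => rep.curve (Sum.inl v), fun v => rep.bends_le _, ?_, ?_⟩⟩
  · intro u v huv
    exact rep.one_string _ _ (fun hc => huv (Sum.inl_injective hc))
  · intro u v huv
    rw [rep.cross_iff _ _ (fun hc => huv (Sum.inl_injective hc))]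
    constructor
    · intro h
      exact (SimpleGraph.mem_edgeSet P.G).mpr ((SimpleGraph.mem_edgeSet (stellP P).G).mp h)
    · intro h
      have hadj : P.G.Adj u v := (SimpleGraph.mem_edgeSet P.G).mp h
      exact (SimpleGraph.mem_edgeSet (stellP P).G).mpr hadj
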